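/- arXiv:2501.18267 — 2 statements merged into one kernel-verified Lean document; each statement's English description precedes it below -/
import Mathlib

section
/- In the group G(D̃₄^{(1,1)}), define elements τᵢ for i ∈ ℤ by τ_{2k} = (t₁t₀)^k · t₀ · (t₁t₀)^{-k} and τ_{2k+1} = (t₁t₀)^k · t₁ · (t₁t₀)^{-k} for k ∈ ℤ. Then the braid relation s₃ τᵢ s₃ = τᵢ s₃ τᵢ holds for every i ∈ ℤ. -/
/-!
STATEMENT 5: In `G(D̃₄^{(1,1)})`, defining `τ_{2k} = (t₁t₀)^k t₀ (t₁t₀)^{-k}` and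
`τ_{2k+1} = (t₁t₀)^k t₁ (t₁t₀)^{-k}`, the braid relation `s₃ τᵢ s₃ = τᵢ s₃ τᵢ` holds for every `i ∈ ℤ`.
-/

namespace EllipticD4

abbrev GenG : Type := Fin 2 ⊕ Fin 4

def tG (i : Fin 2) : FreeGroup GenG := FreeGroup.of (Sum.inl i)
def sG (j : Fin 4) : FreeGroup GenG := FreeGroup.of (Sum.inr j)

/-- Relators of the elliptic Dynkin presentation of `G(D̃₄^{(1,1)})`. -/
def relsG : Set (FreeGroup GenG) :=
  { r | (∃ i j, r = (tG i * sG j * tG i)⁻¹ * (sG j * tG i * sG j)) ∨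
        (∃ i j, i ≠ j ∧ r = (sG i * sG j)⁻¹ * (sG j * sG i)) ∨
        (∃ i, r = (sG i * tG 1 * tG 0 * sG i * tG 1 * tG 0)⁻¹ *
                  (tG 1 * tG 0 * sG i * tG 1 * tG 0 * sG i)) }

/-- The image of the generator `tᵢ` (`i ∈ {0,1}`) in `G(D̃₄^{(1,1)})`. -/
def t (i : Fin 2) : PresentedGroup relsG := PresentedGroup.of (Sum.inl i)

/-- The image of the generator `sⱼ` (`j ∈ {1,2,3,4}`) in `G(D̃₄^{(1,1)})`;
`s 2` is the generator `s₃`. -/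
def s (j : Fin 4) : PresentedGroup relsG := PresentedGroup.of (Sum.inr j)

/-- Key abstract lemma: if `s` braids with `p` and `q`, and `s` satisfies the
elliptic relation `s c s c = c s c s` with `c = q p`, then `s` braids with
`q p q⁻¹` and with `p⁻¹ q p`. -/
theorem braid_conj {G : Type*} [Group G] (σ p q c : G)
    (hqp : q * p = c)
    (hp : σ * p * σ = p * σ * p) (hq : σ * q * σ = q * σ * q)
    (hc : σ * c * σ * c = c * σ * c * σ) :
    (σ * (q * p * q⁻¹) * σ = (q * p * q⁻¹) * σ * (q * p * q⁻¹)) ∧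
    (σ * (p⁻¹ * q * p) * σ = (p⁻¹ * q * p) * σ * (p⁻¹ * q * p)) := by
  subst hqp
  -- u = σ q σ⁻¹
  have hqu : q * (σ * q * σ⁻¹) = σ * q := by
    calc q * (σ * q * σ⁻¹) = (q * σ * q) * σ⁻¹ := by group
      _ = (σ * q * σ) * σ⁻¹ := by rw [hq]
      _ = σ * q := by group
  have huq : (σ * q * σ⁻¹) * q⁻¹ = q⁻¹ * σ := by
    apply mul_left_cancel (a := q)
    calc q * ((σ * q * σ⁻¹) * q⁻¹) = (q * (σ * q * σ⁻¹)) * q⁻¹ := by group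
      _ = (σ * q) * q⁻¹ := by rw [hqu]
      _ = q * (q⁻¹ * σ) := by group
  have hq2 : q⁻¹ * σ * q = σ * q * σ⁻¹ := by
    calc q⁻¹ * σ * q = (q⁻¹ * σ) * q := by group
      _ = ((σ * q * σ⁻¹) * q⁻¹) * q := by rw [huq]
      _ = σ * q * σ⁻¹ := by group
  have hps : p * σ * p⁻¹ = σ⁻¹ * p * σ := by
    apply mul_left_cancel (a := σ)
    calc σ * (p * σ * p⁻¹) = (σ * p * σ) * p⁻¹ := by group
      _ = (p * σ * p) * p⁻¹ := by rw [hp]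
      _ = σ * (σ⁻¹ * p * σ) := by group
  -- the main consequence of the elliptic relation
  have E : p * σ * q * p * σ = (σ * q * σ⁻¹) * (p * σ * q * p) := by
    apply mul_left_cancel (a := q)
    calc q * (p * σ * q * p * σ) = (q * p) * σ * (q * p) * σ := by group
      _ = σ * (q * p) * σ * (q * p) := (hc).symm
      _ = (σ * q) * (p * σ * q * p) := by group
      _ = (q * (σ * q * σ⁻¹)) * (p * σ * q * p) := by rw [hqu]
      _ = q * ((σ * q * σ⁻¹) * (p * σ * q * p)) := by group
  have key : p * (σ * q * σ⁻¹) * p = (σ * q * σ⁻¹) * p * (σ * q * σ⁻¹) := by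
    apply mul_right_cancel (b := σ)
    calc p * (σ * q * σ⁻¹) * p * σ = p * σ * q * (σ⁻¹ * p * σ) := by group
      _ = p * σ * q * (p * σ * p⁻¹) := by rw [hps]
      _ = (p * σ * q * p * σ) * p⁻¹ := by group
      _ = ((σ * q * σ⁻¹) * (p * σ * q * p)) * p⁻¹ := by rw [E]
      _ = (σ * q * σ⁻¹) * p * (σ * q * σ⁻¹) * σ := by group
  constructor
  · -- braid with q p q⁻¹
    refine Eq.symm ?_
    calc (q * p * q⁻¹) * σ * (q * p * q⁻¹)
        = q * p * (q⁻¹ * σ * q) * (p * q⁻¹) := by group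
      _ = q * p * (σ * q * σ⁻¹) * (p * q⁻¹) := by rw [hq2]
      _ = q * (p * (σ * q * σ⁻¹) * p) * q⁻¹ := by group
      _ = q * ((σ * q * σ⁻¹) * p * (σ * q * σ⁻¹)) * q⁻¹ := by rw [key]
      _ = (q * (σ * q * σ⁻¹)) * p * ((σ * q * σ⁻¹) * q⁻¹) := by group
      _ = (σ * q) * p * ((σ * q * σ⁻¹) * q⁻¹) := by rw [hqu]
      _ = (σ * q) * p * (q⁻¹ * σ) := by rw [huq]
      _ = σ * (q * p * q⁻¹) * σ := by group
  · -- braid with p⁻¹ q p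
    have key2 : (p * σ * p⁻¹) * q * (p * σ * p⁻¹) = q * (p * σ * p⁻¹) * q := by
      calc (p * σ * p⁻¹) * q * (p * σ * p⁻¹)
          = (σ⁻¹ * p * σ) * q * (σ⁻¹ * p * σ) := by rw [hps]
        _ = σ⁻¹ * (p * (σ * q * σ⁻¹) * p) * σ := by group
        _ = σ⁻¹ * ((σ * q * σ⁻¹) * p * (σ * q * σ⁻¹)) * σ := by rw [key]
        _ = q * (σ⁻¹ * p * σ) * q := by group
        _ = q * (p * σ * p⁻¹) * q := by rw [hps]
    calc σ * (p⁻¹ * q * p) * σ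
        = p⁻¹ * ((p * σ * p⁻¹) * q * (p * σ * p⁻¹)) * p := by group
      _ = p⁻¹ * (q * (p * σ * p⁻¹) * q) * p := by rw [key2]
      _ = (p⁻¹ * q * p) * σ * (p⁻¹ * q * p) := by group

theorem braid_s3_tau (τ : ℤ → PresentedGroup relsG)
    (heven : ∀ k : ℤ, τ (2 * k) = (t 1 * t 0) ^ k * t 0 * (t 1 * t 0) ^ (-k))
    (hodd : ∀ k : ℤ, τ (2 * k + 1) = (t 1 * t 0) ^ k * t 1 * (t 1 * t 0) ^ (-k)) :
    ∀ i : ℤ, s 2 * τ i * s 2 = τ i * s 2 * τ i := by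
  -- extract the relations of the presentation
  have hone : ∀ r ∈ relsG, PresentedGroup.mk relsG r = 1 := fun r hr =>
    (QuotientGroup.eq_one_iff r).2 (Subgroup.subset_normalClosure hr)
  have hrel1 : ∀ (i : Fin 2) (j : Fin 4), t i * s j * t i = s j * t i * s j := by
    intro i j
    have h := hone _ (Or.inl ⟨i, j, rfl⟩)
    simp only [map_mul, map_inv] at h
    exact inv_mul_eq_one.mp h
  have hrel3 : ∀ (j : Fin 4),
      s j * t 1 * t 0 * s j * t 1 * t 0 = t 1 * t 0 * s j * t 1 * t 0 * s j := by
    intro j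
    have h := hone _ (Or.inr (Or.inr ⟨j, rfl⟩))
    simp only [map_mul, map_inv] at h
    exact inv_mul_eq_one.mp h
  have hc3 : s 2 * (t 1 * t 0) * s 2 * (t 1 * t 0)
      = (t 1 * t 0) * s 2 * (t 1 * t 0) * s 2 := by
    calc s 2 * (t 1 * t 0) * s 2 * (t 1 * t 0)
        = s 2 * t 1 * t 0 * s 2 * t 1 * t 0 := by group
      _ = t 1 * t 0 * s 2 * t 1 * t 0 * s 2 := hrel3 2
      _ = (t 1 * t 0) * s 2 * (t 1 * t 0) * s 2 := by group
  set σ := s 2 with hσ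
  set c := t 1 * t 0 with hcdef
  -- conjugation identities for the middle letters
  have hA : t 1 * t 0 * (t 1)⁻¹ = c * t 0 * c⁻¹ := by rw [hcdef]; group
  have hB : t 0 * (c⁻¹ * t 1 * c) * (t 0)⁻¹ = t 1 := by rw [hcdef]; group
  have hB2 : t 0 * (c⁻¹ * t 1 * c) = t 1 * t 0 := by rw [hcdef]; group
  have hC : (t 0)⁻¹ * t 1 * t 0 = c⁻¹ * t 1 * c := by rw [hcdef]; group
  have hD : (t 1)⁻¹ * (c * t 0 * c⁻¹) * t 1 = t 0 := by rw [hcdef]; group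
  -- the product identities needed in the induction
  have hqp1 : ∀ m : ℤ, (c ^ m * t 1 * c ^ (-m)) * (c ^ m * t 0 * c ^ (-m)) = c := by
    intro m
    calc (c ^ m * t 1 * c ^ (-m)) * (c ^ m * t 0 * c ^ (-m))
        = c ^ m * (t 1 * t 0) * c ^ (-m) := by group
      _ = c ^ m * c * c ^ (-m) := by rw [← hcdef]
      _ = c := by group
  have he1 : ∀ m : ℤ, (c ^ m * t 1 * c ^ (-m)) * (c ^ m * t 0 * c ^ (-m))
      * (c ^ m * t 1 * c ^ (-m))⁻¹ = c ^ (m + 1) * t 0 * c ^ (-(m + 1)) := by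
    intro m
    calc (c ^ m * t 1 * c ^ (-m)) * (c ^ m * t 0 * c ^ (-m)) * (c ^ m * t 1 * c ^ (-m))⁻¹
        = c ^ m * (t 1 * t 0 * (t 1)⁻¹) * c ^ (-m) := by group
      _ = c ^ m * (c * t 0 * c⁻¹) * c ^ (-m) := by rw [hA]
      _ = c ^ (m + 1) * t 0 * c ^ (-(m + 1)) := by group
  have hqp2 : ∀ m : ℤ, (c ^ (m + 1) * t 0 * c ^ (-(m + 1))) * (c ^ m * t 1 * c ^ (-m)) = c := by
    intro m
    calc (c ^ (m + 1) * t 0 * c ^ (-(m + 1))) * (c ^ m * t 1 * c ^ (-m))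
        = c ^ (m + 1) * (t 0 * (c⁻¹ * t 1 * c)) * c ^ (-(m + 1)) := by group
      _ = c ^ (m + 1) * (t 1 * t 0) * c ^ (-(m + 1)) := by rw [hB2]
      _ = c ^ (m + 1) * c * c ^ (-(m + 1)) := by rw [← hcdef]
      _ = c := by group
  have he2 : ∀ m : ℤ, (c ^ (m + 1) * t 0 * c ^ (-(m + 1))) * (c ^ m * t 1 * c ^ (-m))
      * (c ^ (m + 1) * t 0 * c ^ (-(m + 1)))⁻¹ = c ^ (m + 1) * t 1 * c ^ (-(m + 1)) := by
    intro m
    calc (c ^ (m + 1) * t 0 * c ^ (-(m + 1))) * (c ^ m * t 1 * c ^ (-m))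
        * (c ^ (m + 1) * t 0 * c ^ (-(m + 1)))⁻¹
        = c ^ (m + 1) * (t 0 * (c⁻¹ * t 1 * c) * (t 0)⁻¹) * c ^ (-(m + 1)) := by group
      _ = c ^ (m + 1) * t 1 * c ^ (-(m + 1)) := by rw [hB]
  have hd1 : ∀ m : ℤ, (c ^ m * t 0 * c ^ (-m))⁻¹ * (c ^ m * t 1 * c ^ (-m))
      * (c ^ m * t 0 * c ^ (-m)) = c ^ (m - 1) * t 1 * c ^ (-(m - 1)) := by
    intro m
    calc (c ^ m * t 0 * c ^ (-m))⁻¹ * (c ^ m * t 1 * c ^ (-m)) * (c ^ m * t 0 * c ^ (-m))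
        = c ^ m * ((t 0)⁻¹ * t 1 * t 0) * c ^ (-m) := by group
      _ = c ^ m * (c⁻¹ * t 1 * c) * c ^ (-m) := by rw [hC]
      _ = c ^ (m - 1) * t 1 * c ^ (-(m - 1)) := by group
  have hqp3 : ∀ m : ℤ, (c ^ m * t 0 * c ^ (-m)) * (c ^ (m - 1) * t 1 * c ^ (-(m - 1))) = c := by
    intro m
    calc (c ^ m * t 0 * c ^ (-m)) * (c ^ (m - 1) * t 1 * c ^ (-(m - 1)))
        = c ^ m * (t 0 * (c⁻¹ * t 1 * c)) * c ^ (-m) := by group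
      _ = c ^ m * (t 1 * t 0) * c ^ (-m) := by rw [hB2]
      _ = c ^ m * c * c ^ (-m) := by rw [← hcdef]
      _ = c := by group
  have hd2 : ∀ m : ℤ, (c ^ (m - 1) * t 1 * c ^ (-(m - 1)))⁻¹ * (c ^ m * t 0 * c ^ (-m))
      * (c ^ (m - 1) * t 1 * c ^ (-(m - 1))) = c ^ (m - 1) * t 0 * c ^ (-(m - 1)) := by
    intro m
    calc (c ^ (m - 1) * t 1 * c ^ (-(m - 1)))⁻¹ * (c ^ m * t 0 * c ^ (-m))
        * (c ^ (m - 1) * t 1 * c ^ (-(m - 1)))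
        = c ^ (m - 1) * ((t 1)⁻¹ * (c * t 0 * c⁻¹) * t 1) * c ^ (-(m - 1)) := by group
      _ = c ^ (m - 1) * t 0 * c ^ (-(m - 1)) := by rw [hD]
  have main : ∀ k : ℤ,
      (σ * (c ^ k * t 0 * c ^ (-k)) * σ
        = (c ^ k * t 0 * c ^ (-k)) * σ * (c ^ k * t 0 * c ^ (-k))) ∧
      (σ * (c ^ k * t 1 * c ^ (-k)) * σ
        = (c ^ k * t 1 * c ^ (-k)) * σ * (c ^ k * t 1 * c ^ (-k))) := by
    intro k
    induction k using Int.induction_on with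
    | zero =>
      constructor
      · simpa using (hrel1 0 2).symm
      · simpa using (hrel1 1 2).symm
    | succ k ih =>
      obtain ⟨ih0, ih1⟩ := ih
      have h1 := (braid_conj σ (c ^ (k : ℤ) * t 0 * c ^ (-(k : ℤ)))
        (c ^ (k : ℤ) * t 1 * c ^ (-(k : ℤ))) c (hqp1 k) ih0 ih1 hc3).1
      rw [he1 k] at h1
      have h2 := (braid_conj σ (c ^ (k : ℤ) * t 1 * c ^ (-(k : ℤ)))
        (c ^ ((k : ℤ) + 1) * t 0 * c ^ (-((k : ℤ) + 1))) c (hqp2 k) ih1 h1 hc3).1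
      rw [he2 k] at h2
      exact ⟨h1, h2⟩
    | pred k ih =>
      obtain ⟨ih0, ih1⟩ := ih
      have h1 := (braid_conj σ (c ^ (-(k : ℤ)) * t 0 * c ^ (-(-(k : ℤ))))
        (c ^ (-(k : ℤ)) * t 1 * c ^ (-(-(k : ℤ)))) c (hqp1 (-k)) ih0 ih1 hc3).2
      rw [hd1 (-k)] at h1
      have h2 := (braid_conj σ (c ^ (-(k : ℤ) - 1) * t 1 * c ^ (-(-(k : ℤ) - 1)))
        (c ^ (-(k : ℤ)) * t 0 * c ^ (-(-(k : ℤ)))) c (hqp3 (-k)) h1 ih0 hc3).2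
      rw [hd2 (-k)] at h2
      exact ⟨h2, h1⟩
  intro i
  rcases Int.even_or_odd i with ⟨k, hk⟩ | ⟨k, hk⟩
  · have hk' : i = 2 * k := by omega
    rw [hk', heven k]
    exact (main k).1
  · have hk' : i = 2 * k + 1 := by omega
    rw [hk', hodd k]
    exact (main k).2

end EllipticD4
end

section
/- The elliptic Artin monoid M'(Ẽ₈^{(1,1)}) is cancellative: for all elements u, v, w of M'(Ẽ₈^{(1,1)}), u·v = u·w implies v = w, and v·u = w·u implies v = w. -/
/-!
STATEMENT 19: The elliptic Artin monoid `M'(Ẽ₈^{(1,1)})` is cancellative.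
-/

namespace EllipticE8Monoid

/-- Generators: `Sum.inl i` is `tᵢ` (`i ∈ ℤ`), `Sum.inr j` is `s_(j+1)`
(so `Sum.inr 0` is `s₁`, ..., `Sum.inr 7` is `s₈`). -/
abbrev S : Type := ℤ ⊕ Fin 8

def t (i : ℤ) : FreeMonoid S := FreeMonoid.of (Sum.inl i)
def s (j : Fin 8) : FreeMonoid S := FreeMonoid.of (Sum.inr j)

/-- The pairs of (0-indexed) `s`-generators joined by an edge in the diagram,
i.e. satisfying a braid relation: (s₂,s₄), (s₃,s₅), (s₅,s₆), (s₆,s₇), (s₇,s₈). -/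
def braidPairs : List (Fin 8 × Fin 8) := [(1, 3), (2, 4), (4, 5), (5, 6), (6, 7)]

/-- The defining relations of `M'(Ẽ₈^{(1,1)})`:
`tᵢsⱼtᵢ = sⱼtᵢsⱼ` for `i ∈ ℤ` and `j ∈ {1,2,3}`;
`tᵢtᵢ₋₁ = tⱼtⱼ₋₁` for all `i, j ∈ ℤ`;
braid relations `xyx = yxy` along the edges of the `s`-part of the diagram;
commutation relations between the remaining pairs of distinct `s`-generators;
and commutation of every `tᵢ` with `s₄, …, s₈`. -/
def rels : FreeMonoid S → FreeMonoid S → Prop := fun a b =>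
  (∃ i : ℤ, ∃ j : Fin 8, j.val < 3 ∧ a = t i * s j * t i ∧ b = s j * t i * s j) ∨
  (∃ i j : ℤ, a = t i * t (i - 1) ∧ b = t j * t (j - 1)) ∨
  (∃ q ∈ braidPairs, a = s q.1 * s q.2 * s q.1 ∧ b = s q.2 * s q.1 * s q.2) ∨
  (∃ i j : Fin 8, i ≠ j ∧ (i, j) ∉ braidPairs ∧ (j, i) ∉ braidPairs ∧
    a = s i * s j ∧ b = s j * s i) ∨
  (∃ i : ℤ, ∃ j : Fin 8, 3 ≤ j.val ∧ a = t i * s j ∧ b = s j * t i)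

/-- The elliptic Artin monoid `M'(Ẽ₈^{(1,1)})`. -/
abbrev M := PresentedMonoid rels

/-! ### Auxiliary development -/

open FreeMonoid Sum

abbrev W : Type := FreeMonoid S

/-- One-step rewriting using a defining relation (in either direction) anywhere in a word. -/
def Step (a b : W) : Prop :=
  ∃ l r p q : W, (rels l r ∨ rels r l) ∧ a = p * l * q ∧ b = p * r * q

/-- The congruence generated by the relations, as reflexive-transitive closure of `Step`. -/
def Rw : W → W → Prop := Relation.ReflTransGen Step

lemma Step.symm {a b : W} (h : Step a b) : Step b a := by
  obtain ⟨l, r, p, q, hlr, ha, hb⟩ := h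
  exact ⟨r, l, p, q, hlr.symm, hb, ha⟩

lemma Rw.refl (a : W) : Rw a a := Relation.ReflTransGen.refl

lemma Rw.trans {a b c : W} (h : Rw a b) (h' : Rw b c) : Rw a c :=
  Relation.ReflTransGen.trans h h'

lemma Rw.symm {a b : W} (h : Rw a b) : Rw b a :=
  by haveI : Std.Symm Step := ⟨fun _ _ hs => Step.symm hs⟩
     exact Std.Symm.symm (r := Relation.ReflTransGen Step) _ _ h

instance : Trans Rw Rw Rw := ⟨Rw.trans⟩

lemma Step.rw {a b : W} (h : Step a b) : Rw a b := Relation.ReflTransGen.single h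

lemma Step.mul_left (c : W) {a b : W} (h : Step a b) : Step (c * a) (c * b) := by
  obtain ⟨l, r, p, q, hlr, ha, hb⟩ := h
  exact ⟨l, r, c * p, q, hlr, by rw [ha]; simp [mul_assoc], by rw [hb]; simp [mul_assoc]⟩

lemma Step.mul_right (c : W) {a b : W} (h : Step a b) : Step (a * c) (b * c) := by
  obtain ⟨l, r, p, q, hlr, ha, hb⟩ := h
  exact ⟨l, r, p, q * c, hlr, by rw [ha]; simp [mul_assoc], by rw [hb]; simp [mul_assoc]⟩

lemma Rw.mul_left (c : W) {a b : W} (h : Rw a b) : Rw (c * a) (c * b) :=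
  Relation.ReflTransGen.lift (fun x => c * x) (fun _ _ hs => Step.mul_left c hs) _ _ h

lemma Rw.mul_right (c : W) {a b : W} (h : Rw a b) : Rw (a * c) (b * c) :=
  Relation.ReflTransGen.lift (fun x => x * c) (fun _ _ hs => Step.mul_right c hs) _ _ h

lemma Rw.mul_congr {a b c d : W} (h : Rw a b) (h' : Rw c d) : Rw (a * c) (b * d) :=
  (h.mul_right c).trans (h'.mul_left b)

/-! ### Lengths -/

lemma rels_length {a b : W} (h : rels a b) : a.length = b.length := by
  rcases h with ⟨i, j, _, ha, hb⟩ | ⟨i, j, ha, hb⟩ | ⟨p, _, ha, hb⟩ | ⟨i, j, _, _, _, ha, hb⟩ |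
    ⟨i, j, _, ha, hb⟩ <;> subst ha <;> subst hb <;>
    simp [t, s, FreeMonoid.length_mul, FreeMonoid.length_of]

lemma Step.length {a b : W} (h : Step a b) : a.length = b.length := by
  obtain ⟨l, r, p, q, hlr, ha, hb⟩ := h
  have : l.length = r.length := by
    rcases hlr with h | h
    · exact rels_length h
    · exact (rels_length h).symm
  subst ha; subst hb; simp [FreeMonoid.length_mul, this]

lemma Rw.length {a b : W} (h : Rw a b) : a.length = b.length := by
  induction h with
  | refl => rfl
  | tail _ hs ih => exact ih.trans hs.length

/-! ### The complement function θ -/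

/-- Adjacency in the braid graph of the `s`-generators. -/
def bb (a b : Fin 8) : Prop := (a, b) ∈ braidPairs ∨ (b, a) ∈ braidPairs

instance : ∀ a b, Decidable (bb a b) := fun a b => by unfold bb; infer_instance

lemma bb_symm {a b : Fin 8} (h : bb a b) : bb b a := Or.symm h

/-- The right complement: for generators `x ≠ z`, `x * θ x z = z * θ z x` is a defining
relation; `θ x x = 1`. -/
def theta : S → S → W
  | inl i, inl j => if i = j then 1 else t (i - 1)
  | inl i, inr b => if b.val < 3 then s b * t i else s b
  | inr b, inl i => if b.val < 3 then t i * s b else t i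
  | inr a, inr b => if a = b then 1 else if bb a b then s b * s a else s b

lemma theta_self (a : S) : theta a a = 1 := by cases a <;> simp [theta]

lemma theta_tt {i j : ℤ} (h : i ≠ j) : theta (inl i) (inl j) = t (i - 1) := by
  simp [theta, h]

lemma theta_ts_braid {b : Fin 8} (h : b.val < 3) (i : ℤ) :
    theta (inl i) (inr b) = s b * t i := by simp [theta, h]

lemma theta_st_braid {b : Fin 8} (h : b.val < 3) (i : ℤ) :
    theta (inr b) (inl i) = t i * s b := by simp [theta, h]

lemma theta_ts_comm {b : Fin 8} (h : 3 ≤ b.val) (i : ℤ) :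
    theta (inl i) (inr b) = s b := by simp [theta, Nat.not_lt.mpr h]

lemma theta_st_comm {b : Fin 8} (h : 3 ≤ b.val) (i : ℤ) :
    theta (inr b) (inl i) = t i := by simp [theta, Nat.not_lt.mpr h]

lemma theta_ss_braid {a b : Fin 8} (hne : a ≠ b) (h : bb a b) :
    theta (inr a) (inr b) = s b * s a := by simp [theta, hne, h]

lemma theta_ss_comm {a b : Fin 8} (hne : a ≠ b) (h : ¬ bb a b) :
    theta (inr a) (inr b) = s b := by simp [theta, hne, h]

lemma theta_length_symm (x z : S) : (theta x z).length = (theta z x).length := by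
  rcases x with i | a <;> rcases z with j | b
  · by_cases h : i = j
    · subst h; simp
    · rw [theta_tt h, theta_tt (Ne.symm h)]
      simp [t]
  · by_cases h : b.val < 3
    · rw [theta_ts_braid h, theta_st_braid h]
      simp [t, s, FreeMonoid.length_mul]
    · rw [theta_ts_comm (Nat.not_lt.mp h), theta_st_comm (Nat.not_lt.mp h)]
      simp [t, s]
  · by_cases h : a.val < 3
    · rw [theta_ts_braid h, theta_st_braid h]
      simp [t, s, FreeMonoid.length_mul]
    · rw [theta_ts_comm (Nat.not_lt.mp h), theta_st_comm (Nat.not_lt.mp h)]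
      simp [t, s]
  · by_cases h : a = b
    · subst h; simp
    · by_cases h2 : bb a b
      · rw [theta_ss_braid h h2, theta_ss_braid (Ne.symm h) (bb_symm h2)]
        simp [s, FreeMonoid.length_mul]
      · rw [theta_ss_comm h h2, theta_ss_comm (Ne.symm h) (fun hc => h2 hc.symm)]
        simp [s]

/-! ### Basic relation instances -/

lemma rels_rw {a b : W} (h : rels a b) : Rw a b :=
  Step.rw ⟨a, b, 1, 1, Or.inl h, by simp, by simp⟩

/-- Commuting pair of generators. -/
def CommP (a b : S) : Prop := Rw (FreeMonoid.of a * FreeMonoid.of b) (FreeMonoid.of b * FreeMonoid.of a)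

/-- Braiding pair of generators. -/
def BraidP (a b : S) : Prop :=
  Rw (FreeMonoid.of a * FreeMonoid.of b * FreeMonoid.of a)
     (FreeMonoid.of b * FreeMonoid.of a * FreeMonoid.of b)

lemma CommP.symm {a b : S} (h : CommP a b) : CommP b a := Rw.symm h

lemma BraidP.symm {a b : S} (h : BraidP a b) : BraidP b a := Rw.symm h

lemma CommP.tail {a b : S} (h : CommP a b) (w : W) :
    Rw (FreeMonoid.of a * (FreeMonoid.of b * w)) (FreeMonoid.of b * (FreeMonoid.of a * w)) := by
  simpa [mul_assoc] using h.mul_right w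

lemma BraidP.tail {a b : S} (h : BraidP a b) (w : W) :
    Rw (FreeMonoid.of a * (FreeMonoid.of b * (FreeMonoid.of a * w)))
       (FreeMonoid.of b * (FreeMonoid.of a * (FreeMonoid.of b * w))) := by
  simpa [mul_assoc] using h.mul_right w

lemma tt_rw (i j : ℤ) : Rw (t i * t (i - 1)) (t j * t (j - 1)) :=
  rels_rw (Or.inr (Or.inl ⟨i, j, rfl, rfl⟩))

lemma tt_tail (i j : ℤ) (w : W) : Rw (t i * (t (i - 1) * w)) (t j * (t (j - 1) * w)) := by
  simpa [mul_assoc] using (tt_rw i j).mul_right w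

lemma braid_ts {b : Fin 8} (h : b.val < 3) (i : ℤ) : BraidP (inl i) (inr b) :=
  rels_rw (Or.inl ⟨i, b, h, rfl, rfl⟩)

lemma comm_ts {b : Fin 8} (h : 3 ≤ b.val) (i : ℤ) : CommP (inl i) (inr b) :=
  rels_rw (Or.inr (Or.inr (Or.inr (Or.inr ⟨i, b, h, rfl, rfl⟩))))

lemma braid_ss {a b : Fin 8} (h : bb a b) : BraidP (inr a) (inr b) := by
  rcases h with h | h
  · exact rels_rw (Or.inr (Or.inr (Or.inl ⟨(a, b), h, rfl, rfl⟩)))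
  · exact BraidP.symm (rels_rw (Or.inr (Or.inr (Or.inl ⟨(b, a), h, rfl, rfl⟩))))

lemma comm_ss {a b : Fin 8} (hne : a ≠ b) (h : ¬ bb a b) : CommP (inr a) (inr b) := by
  refine rels_rw (Or.inr (Or.inr (Or.inr (Or.inl ⟨a, b, hne, ?_, ?_, rfl, rfl⟩))))
  · exact fun hc => h (Or.inl hc)
  · exact fun hc => h (Or.inr hc)

/-! ### Shape of the defining relations -/

lemma braidPairs_ne {p : Fin 8 × Fin 8} (hp : p ∈ braidPairs) : p.1 ≠ p.2 ∧ bb p.1 p.2 := by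
  fin_cases hp <;> exact ⟨by decide, Or.inl (by decide)⟩

lemma rels_shape {a b : W} (h : rels a b) :
    a = b ∨ ∃ x z : S, x ≠ z ∧ a = FreeMonoid.of x * theta x z ∧
      b = FreeMonoid.of z * theta z x := by
  rcases h with ⟨i, j, hj, ha, hb⟩ | ⟨i, j, ha, hb⟩ | ⟨p, hp, ha, hb⟩ |
      ⟨i, j, hne, h1, h2, ha, hb⟩ | ⟨i, j, hj, ha, hb⟩
  · refine Or.inr ⟨inl i, inr j, by simp, ?_, ?_⟩
    · rw [ha, theta_ts_braid hj]; simp [t, s, mul_assoc]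
    · rw [hb, theta_st_braid hj]; simp [t, s, mul_assoc]
  · by_cases hij : i = j
    · subst hij; exact Or.inl (ha.trans hb.symm)
    · refine Or.inr ⟨inl i, inl j, by simp [hij], ?_, ?_⟩
      · rw [ha, theta_tt hij]; rfl
      · rw [hb, theta_tt (Ne.symm hij)]; rfl
  · obtain ⟨hne, hbb⟩ := braidPairs_ne hp
    refine Or.inr ⟨inr p.1, inr p.2, by simp [hne], ?_, ?_⟩
    · rw [ha, theta_ss_braid hne hbb]; simp [s, mul_assoc]
    · rw [hb, theta_ss_braid (Ne.symm hne) (bb_symm hbb)]; simp [s, mul_assoc]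
  · have hnb : ¬ bb i j := by rintro (hc | hc) <;> [exact h1 hc; exact h2 hc]
    refine Or.inr ⟨inr i, inr j, by simp [hne], ?_, ?_⟩
    · rw [ha, theta_ss_comm hne hnb]; rfl
    · rw [hb, theta_ss_comm (Ne.symm hne) (fun hc => hnb (bb_symm hc))]; rfl
  · refine Or.inr ⟨inl i, inr j, by simp, ?_, ?_⟩
    · rw [ha, theta_ts_comm hj]; rfl
    · rw [hb, theta_st_comm hj]; rfl

lemma step_shape {l r : W} (h : rels l r ∨ rels r l) :
    l = r ∨ ∃ x z : S, x ≠ z ∧ l = FreeMonoid.of x * theta x z ∧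
      r = FreeMonoid.of z * theta z x := by
  rcases h with h | h
  · exact rels_shape h
  · rcases rels_shape h with h' | ⟨x, z, hne, h1, h2⟩
    · exact Or.inl h'.symm
    · exact Or.inr ⟨z, x, hne.symm, h2, h1⟩

/-! ### Diagram facts -/

lemma bb_lt3 : ∀ a b : Fin 8, a.val < 3 → b.val < 3 → ¬ bb a b := by decide

lemma bb_no_triangle : ∀ a b c : Fin 8, bb a b → bb a c → bb b c → False := by decide

/-! ### The peeling hypothesis -/

/-- The key "reduction" property for all words of length at most `N`. -/
def PH (N : ℕ) : Prop := ∀ u v : W, u.length ≤ N → Rw u v →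
  ∀ (a : S) (u₀ : W) (b : S) (v₀ : W), u = FreeMonoid.of a * u₀ → v = FreeMonoid.of b * v₀ →
  ∃ w, Rw u₀ (theta a b * w) ∧ Rw v₀ (theta b a * w)

lemma PH.peel {N : ℕ} (HA : PH N) {a b : S} {u₀ v₀ : W}
    (h : Rw (FreeMonoid.of a * u₀) (FreeMonoid.of b * v₀)) (hl : u₀.length < N) :
    ∃ w, Rw u₀ (theta a b * w) ∧ Rw v₀ (theta b a * w) :=
  HA _ _ (by simp [FreeMonoid.length_mul, FreeMonoid.length_of]; omega) h a u₀ b v₀ rfl rfl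

lemma PH.cancel {N : ℕ} (HA : PH N) {a : S} {u₀ v₀ : W}
    (h : Rw (FreeMonoid.of a * u₀) (FreeMonoid.of a * v₀)) (hl : u₀.length < N) :
    Rw u₀ v₀ := by
  obtain ⟨w, h1, h2⟩ := HA.peel h hl
  rw [theta_self, one_mul] at h1 h2
  exact h1.trans h2.symm

lemma PH.cancel_word {N : ℕ} (HA : PH N) (α : W) {u v : W} :
    Rw (α * u) (α * v) → (α * u).length ≤ N → Rw u v := by
  induction α using FreeMonoid.inductionOn' with
  | one => intro h _; simpa using h
  | of_mul a α' ih =>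
    intro h hl
    rw [mul_assoc, mul_assoc] at h
    have hlt : (α' * u).length < N := by
      simp only [FreeMonoid.length_mul, FreeMonoid.length_of] at hl ⊢; omega
    exact ih (HA.cancel h hlt) (le_of_lt hlt)

/-! ### Cube conditions: generic (non-`t t`) cases -/

section Cube

variable {N : ℕ}

local notation "F" => FreeMonoid.of

/-- Cube: all three pairs commute. -/
lemma cube_kkk (HA : PH N) {x y z : S} (czx : CommP z x) (czy : CommP z y)
    (hxy : theta x y = F y) (hyx : theta y x = F x)
    {q w1 : W} (H : Rw (F x * q) (F y * w1)) (hq : q.length < N) :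
    ∃ w, Rw (F z * q) (F y * w) ∧ Rw (F z * w1) (F x * w) := by
  obtain ⟨w2, h1, h2⟩ := HA.peel H hq
  rw [hxy] at h1; rw [hyx] at h2
  exact ⟨F z * w2, (h1.mul_left (F z)).trans (czy.tail w2),
    (h2.mul_left (F z)).trans (czx.tail w2)⟩

/-- Cube: `z,x` braid; `x,y` and `z,y` commute. -/
lemma cube_bkk (HA : PH N) {x y z : S} (bzx : BraidP z x) (cxy : CommP x y) (czy : CommP z y)
    (hxy : theta x y = F y) (hyx : theta y x = F x)
    (hzy : theta z y = F y) (hyz : theta y z = F z)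
    {q w1 : W} (H : Rw (F x * (F z * q)) (F y * w1)) (hq : q.length + 1 < N) :
    ∃ w, Rw (F z * (F x * q)) (F y * w) ∧ Rw (F z * w1) (F x * w) := by
  obtain ⟨w2, h1, h2⟩ := HA.peel H (by
    simp only [FreeMonoid.length_mul, FreeMonoid.length_of]; omega)
  rw [hxy] at h1; rw [hyx] at h2
  obtain ⟨w3, h3, h4⟩ := HA.peel h1 (by omega)
  rw [hzy] at h3; rw [hyz] at h4
  refine ⟨F z * (F x * w3), ?_, ?_⟩
  · exact (((h3.mul_left (F x)).mul_left (F z)).trans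
      ((cxy.tail w3).mul_left (F z))).trans (czy.tail (F x * w3))
  · exact (h2.mul_left (F z)).trans (((h4.mul_left (F x)).mul_left (F z)).trans (bzx.tail w3))

/-- Cube: `x,y` braid; `z,x` and `z,y` commute. -/
lemma cube_kbk (HA : PH N) {x y z : S} (bxy : BraidP x y) (czx : CommP z x) (czy : CommP z y)
    (hxy : theta x y = F y * F x) (hyx : theta y x = F x * F y)
    {q w1 : W} (H : Rw (F x * q) (F y * w1)) (hq : q.length < N) :
    ∃ w, Rw (F z * q) (F y * (F x * w)) ∧ Rw (F z * w1) (F x * (F y * w)) := by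
  obtain ⟨w2, h1, h2⟩ := HA.peel H hq
  rw [hxy, mul_assoc] at h1; rw [hyx, mul_assoc] at h2
  refine ⟨F z * w2, ?_, ?_⟩
  · exact ((h1.mul_left (F z)).trans (czy.tail (F x * w2))).trans
      ((czx.tail w2).mul_left (F y))
  · exact ((h2.mul_left (F z)).trans (czx.tail (F y * w2))).trans
      ((czy.tail w2).mul_left (F x))

/-- Cube: `z,x` and `z,y` braid; `x,y` commute. -/
lemma cube_bbk (HA : PH N) {x y z : S} (bzx : BraidP z x) (bzy : BraidP z y) (cxy : CommP x y)
    (hxy : theta x y = F y) (hyx : theta y x = F x)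
    (hzy : theta z y = F y * F z) (hyz : theta y z = F z * F y)
    (hzx : theta z x = F x * F z) (hxz : theta x z = F z * F x)
    {q w1 : W} (H : Rw (F x * (F z * q)) (F y * (F z * w1))) (hq : q.length + 1 < N) :
    ∃ w, Rw (F z * (F x * q)) (F y * w) ∧ Rw (F z * (F y * w1)) (F x * w) := by
  have hw1 : w1.length = q.length := by
    have := H.length
    simp only [FreeMonoid.length_mul, FreeMonoid.length_of] at this; omega
  obtain ⟨w2, h1, h2⟩ := HA.peel H (by
    simp only [FreeMonoid.length_mul, FreeMonoid.length_of]; omega)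
  rw [hxy] at h1; rw [hyx] at h2
  obtain ⟨w3, h3, h4⟩ := HA.peel h1 (by omega)
  rw [hzy, mul_assoc] at h3; rw [hyz, mul_assoc] at h4
  have hw3 : q.length = 2 + w3.length := by
    have := h3.length
    simp only [FreeMonoid.length_mul, FreeMonoid.length_of] at this; omega
  have h2' : Rw (F z * w1) (F x * (F z * (F y * w3))) := h2.trans (h4.mul_left (F x))
  obtain ⟨w4, h5, h6⟩ := HA.peel h2' (by omega)
  rw [hzx, mul_assoc] at h5; rw [hxz, mul_assoc] at h6
  have h7 : Rw (F y * w3) (F x * w4) := HA.cancel h6 (by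
    simp only [FreeMonoid.length_mul, FreeMonoid.length_of]; omega)
  obtain ⟨w5, h8, h9⟩ := HA.peel h7 (by omega)
  rw [hyx] at h8; rw [hxy] at h9
  refine ⟨F z * (F y * (F x * (F z * w5))), ?_, ?_⟩
  · -- z x q ≡ z x y z x ≡ z y x z x ≡ z y z x z ≡ y z y x z
    have e1 : Rw q (F y * (F z * (F x * w5))) :=
      h3.trans ((h8.mul_left (F z)).mul_left (F y))
    exact ((((e1.mul_left (F x)).mul_left (F z)).trans
      ((cxy.tail (F z * (F x * w5))).mul_left (F z))).trans
      (((bzx.symm.tail w5).mul_left (F y)).mul_left (F z))).trans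
      (bzy.tail (F x * (F z * w5)))
  · -- z y w1 ≡ z y x z y ≡ z x y z y ≡ z x z y z ≡ x z x y z ≡ x z y x z
    have e2 : Rw w1 (F x * (F z * (F y * w5))) :=
      h5.trans ((h9.mul_left (F z)).mul_left (F x))
    exact (((((e2.mul_left (F y)).mul_left (F z)).trans
      ((cxy.symm.tail (F z * (F y * w5))).mul_left (F z))).trans
      (((bzy.symm.tail w5).mul_left (F x)).mul_left (F z))).trans
      (bzx.tail (F y * (F z * w5)))).trans
      (((cxy.tail (F z * w5)).mul_left (F z)).mul_left (F x))

/-- Cube: `z,x` and `x,y` braid; `z,y` commute. -/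
lemma cube_bbk_end (HA : PH N) {x y z : S} (bzx : BraidP z x) (bxy : BraidP x y)
    (czy : CommP z y)
    (hxy : theta x y = F y * F x) (hyx : theta y x = F x * F y)
    (hzy : theta z y = F y) (hyz : theta y z = F z)
    (hzx : theta z x = F x * F z) (hxz : theta x z = F z * F x)
    {q w1 : W} (H : Rw (F x * (F z * q)) (F y * w1)) (hq : q.length + 1 < N) :
    ∃ w, Rw (F z * (F x * q)) (F y * (F x * w)) ∧ Rw (F z * w1) (F x * (F y * w)) := by
  obtain ⟨w2, h1, h2⟩ := HA.peel H (by
    simp only [FreeMonoid.length_mul, FreeMonoid.length_of]; omega)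
  rw [hxy, mul_assoc] at h1; rw [hyx, mul_assoc] at h2
  have hw2 : q.length = 1 + w2.length := by
    have := h1.length
    simp only [FreeMonoid.length_mul, FreeMonoid.length_of] at this; omega
  obtain ⟨w3, h3, h4⟩ := HA.peel h1 (by omega)
  rw [hzy] at h3; rw [hyz] at h4
  obtain ⟨w4, h5, h6⟩ := HA.peel h4 (by omega)
  rw [hxz, mul_assoc] at h5; rw [hzx, mul_assoc] at h6
  refine ⟨F z * (F x * (F y * w4)), ?_, ?_⟩
  · -- z x q ≡ z x y x z ≡ z y x y z ≡ y z x y z ≡ y z x z y ≡ y x z x y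
    have e1 : Rw q (F y * (F x * (F z * w4))) := h3.trans (h6.mul_left (F y))
    exact (((((e1.mul_left (F x)).mul_left (F z)).trans
      ((bxy.tail (F z * w4)).mul_left (F z))).trans
      (czy.tail (F x * (F y * (F z * w4))))).trans
      ((((czy.symm.tail w4).mul_left (F x)).mul_left (F z)).mul_left (F y))).trans
      ((bzx.tail (F y * w4)).mul_left (F y))
  · -- z w1 ≡ z x y z x ≡ z x z y x ≡ x z x y x ≡ x z y x y ≡ x y z x y
    have e2 : Rw w1 (F x * (F y * (F z * (F x * w4)))) :=
      h2.trans ((h5.mul_left (F y)).mul_left (F x))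
    exact ((((e2.mul_left (F z)).trans
      ((((czy.symm.tail (F x * w4)).mul_left (F x)).mul_left (F z)))).trans
      (bzx.tail (F y * (F x * w4)))).trans
      (((bxy.tail w4).mul_left (F z)).mul_left (F x))).trans
      ((czy.tail (F x * (F y * w4))).mul_left (F x))

end Cube

/-! ### Cube conditions: cases involving the `t`-relations -/

section CubeT

variable {N : ℕ}

lemma tt_tail' (a b c d : ℤ) (h1 : b = a - 1) (h2 : d = c - 1) (w : W) :
    Rw (t a * (t b * w)) (t c * (t d * w)) := by
  subst h1; subst h2; exact tt_tail a c w

/-- Cube: `x = tᵢ`, `y = s_b` braiding, `z = t_k`. -/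
lemma cube_P_bb (HA : PH N) (i k : ℤ) {b : Fin 8} (hb : b.val < 3) {q w1 : W}
    (H : Rw (t (k - 1) * q) (s b * (t k * w1))) (hq : q.length < N) :
    ∃ w, Rw (t (i - 1) * q) (s b * (t i * w)) ∧
      Rw (t k * (s b * w1)) (t i * (s b * w)) := by
  have hw1 : q.length = 1 + w1.length := by
    have := H.length
    simp only [FreeMonoid.length_mul, FreeMonoid.length_of, t, s] at this; omega
  obtain ⟨w2, h1, h2⟩ := HA.peel (a := inl (k - 1)) (b := inr b) H hq
  rw [theta_ts_braid hb, mul_assoc] at h1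
  rw [theta_st_braid hb, mul_assoc] at h2
  have hw2 : q.length = 2 + w2.length := by
    have := h1.length
    simp only [FreeMonoid.length_mul, FreeMonoid.length_of, t, s] at this ⊢; omega
  obtain ⟨w3, h3, h4⟩ := HA.peel (a := inl k) (b := inl (k - 1)) h2 (by omega)
  rw [theta_tt (by omega)] at h3
  rw [theta_tt (by omega), show (k : ℤ) - 1 - 1 = k - 2 from by ring] at h4
  obtain ⟨w4, h5, h6⟩ := HA.peel (a := inr b) (b := inl (k - 2)) h4 (by omega)
  rw [theta_st_braid hb, mul_assoc] at h5
  rw [theta_ts_braid hb, mul_assoc] at h6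
  refine ⟨t (i - 1) * (s b * (t (i - 2) * w4)), ?_, ?_⟩
  · have e1 : Rw q (s b * (t (k - 1) * (t (k - 2) * (s b * w4)))) :=
      h1.trans ((h5.mul_left (t (k - 1))).mul_left (s b))
    exact (((((e1.mul_left (t (i - 1))).trans
      (((tt_tail' (k - 1) (k - 2) i (i - 1) (by ring) rfl (s b * w4)).mul_left
        (s b)).mul_left (t (i - 1)))).trans
      (((tt_tail' i (i - 1) (i - 1) (i - 2) rfl (by ring) (s b * w4)).mul_left
        (s b)).mul_left (t (i - 1)))).trans
      ((braid_ts hb (i - 1)).tail (t (i - 2) * (s b * w4)))).trans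
      ((((braid_ts hb (i - 2)).symm.tail w4).mul_left (t (i - 1))).mul_left (s b))).trans
      (((tt_tail' (i - 1) (i - 2) i (i - 1) (by ring) rfl
        (s b * (t (i - 2) * w4))).mul_left (s b)))
  · have e2 : Rw w1 (t (k - 1) * (s b * (t (k - 2) * w4))) :=
      h3.trans (h6.mul_left (t (k - 1)))
    exact (((((e2.mul_left (s b)).mul_left (t k)).trans
      ((((braid_ts hb (k - 1)).symm.tail (t (k - 2) * w4)).mul_left (t k)))).trans
      ((((tt_tail' (k - 1) (k - 2) (i - 1) (i - 2) (by ring) (by ring) w4).mul_left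
        (s b)).mul_left (t (k - 1))).mul_left (t k))).trans
      (tt_tail' k (k - 1) i (i - 1) rfl rfl (s b * (t (i - 1) * (t (i - 2) * w4))))).trans
      (((braid_ts hb (i - 1)).tail (t (i - 2) * w4)).mul_left (t i))
end CubeT

section CubeT2

variable {N : ℕ}

/-- Cube: `x = tᵢ`, `y = tⱼ`, `z = s_b` braiding. -/
lemma cube_P_bb_z (HA : PH N) {i j : ℤ} (hij : i ≠ j) {b : Fin 8} (hb : b.val < 3) {q w1 : W}
    (H : Rw (t i * (s b * q)) (t j * (s b * w1))) (hq : q.length + 1 < N) :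
    ∃ w, Rw (s b * (t i * q)) (t (i - 1) * w) ∧ Rw (s b * (t j * w1)) (t (j - 1) * w) := by
  have hw1 : w1.length = q.length := by
    have := H.length
    simp only [FreeMonoid.length_mul, FreeMonoid.length_of, t, s] at this; omega
  obtain ⟨w2, h1, h2⟩ := HA.peel (a := inl i) (b := inl j) H (by
    simp only [FreeMonoid.length_mul, FreeMonoid.length_of, t, s]; omega)
  rw [theta_tt hij] at h1
  rw [theta_tt (Ne.symm hij)] at h2
  obtain ⟨w3, h3, h4⟩ := HA.peel (a := inr b) (b := inl (i - 1)) h1 (by omega)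
  rw [theta_st_braid hb, mul_assoc] at h3
  rw [theta_ts_braid hb, mul_assoc] at h4
  have hw3 : q.length = 2 + w3.length := by
    have := h3.length
    simp only [FreeMonoid.length_mul, FreeMonoid.length_of, t, s] at this; omega
  have h2' : Rw (s b * w1) (t (j - 1) * (s b * (t (i - 1) * w3))) :=
    h2.trans (h4.mul_left (t (j - 1)))
  obtain ⟨w5, h5, h6⟩ := HA.peel (a := inr b) (b := inl (j - 1)) h2' (by omega)
  rw [theta_st_braid hb, mul_assoc] at h5
  rw [theta_ts_braid hb, mul_assoc] at h6
  have h7 : Rw (t (i - 1) * w3) (t (j - 1) * w5) :=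
    HA.cancel (a := inr b) h6 (by
      simp only [FreeMonoid.length_mul, FreeMonoid.length_of, t, s]; omega)
  obtain ⟨w6, h8, h9⟩ := HA.peel (a := inl (i - 1)) (b := inl (j - 1)) h7 (by omega)
  rw [theta_tt (by omega), show (i : ℤ) - 1 - 1 = i - 2 from by ring] at h8
  rw [theta_tt (by omega), show (j : ℤ) - 1 - 1 = j - 2 from by ring] at h9
  -- the key identity, for any index `m`:
  -- t (m-1) * s b * t (m-1) * t (m-2) * s b  ≡  s b * t m * t (m-1) * s b * t (m-2)
  have key : ∀ m : ℤ, Rw (t (m - 1) * (s b * (t (m - 1) * (t (m - 2) * (s b * w6)))))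
      (s b * (t m * (t (m - 1) * (s b * (t (m - 2) * w6))))) := by
    intro m
    exact (((braid_ts hb (m - 1)).tail (t (m - 2) * (s b * w6))).trans
      ((((braid_ts hb (m - 2)).symm.tail w6).mul_left (t (m - 1))).mul_left (s b))).trans
      ((tt_tail' (m - 1) (m - 2) m (m - 1) (by ring) rfl (s b * (t (m - 2) * w6))).mul_left
        (s b))
  refine ⟨s b * (t (i - 1) * (t (i - 2) * (s b * w6))), ?_, ?_⟩
  · have e1 : Rw q (t (i - 1) * (s b * (t (i - 2) * w6))) :=
      h3.trans ((h8.mul_left (s b)).mul_left (t (i - 1)))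
    exact ((e1.mul_left (t i)).mul_left (s b)).trans (key i).symm
  · have e2 : Rw w1 (t (j - 1) * (s b * (t (j - 2) * w6))) :=
      h5.trans ((h9.mul_left (s b)).mul_left (t (j - 1)))
    exact (((e2.mul_left (t j)).mul_left (s b)).trans (key j).symm).trans
      (((tt_tail' (j - 1) (j - 2) (i - 1) (i - 2) (by ring) (by ring)
        (s b * w6)).mul_left (s b)).mul_left (t (j - 1)))

/-- Cube: `x = tᵢ`, `y = s_c` commuting, `z = t_k`. -/
lemma cube_P_kk (HA : PH N) (i k : ℤ) {c : Fin 8} (hc : 3 ≤ c.val) {q w1 : W}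
    (H : Rw (t (k - 1) * q) (s c * w1)) (hq : q.length < N) :
    ∃ w, Rw (t (i - 1) * q) (s c * w) ∧ Rw (t k * w1) (t i * w) := by
  obtain ⟨w2, h1, h2⟩ := HA.peel (a := inl (k - 1)) (b := inr c) H hq
  rw [theta_ts_comm hc] at h1
  rw [theta_st_comm hc] at h2
  refine ⟨t (i - 1) * w2, ?_, ?_⟩
  · exact (h1.mul_left (t (i - 1))).trans ((comm_ts hc (i - 1)).tail w2)
  · exact (h2.mul_left (t k)).trans (tt_tail' k (k - 1) i (i - 1) rfl rfl w2)

/-- Cube: `x = tᵢ`, `y = tⱼ`, `z = s_c` commuting. -/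
lemma cube_P_kk_z (HA : PH N) {i j : ℤ} (hij : i ≠ j) {c : Fin 8} (hc : 3 ≤ c.val) {q w1 : W}
    (H : Rw (t i * q) (t j * w1)) (hq : q.length < N) :
    ∃ w, Rw (s c * q) (t (i - 1) * w) ∧ Rw (s c * w1) (t (j - 1) * w) := by
  obtain ⟨w2, h1, h2⟩ := HA.peel (a := inl i) (b := inl j) H hq
  rw [theta_tt hij] at h1
  rw [theta_tt (Ne.symm hij)] at h2
  refine ⟨s c * w2, ?_, ?_⟩
  · exact (h1.mul_left (s c)).trans ((comm_ts hc (i - 1)).tail w2).symm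
  · exact (h2.mul_left (s c)).trans ((comm_ts hc (j - 1)).tail w2).symm

end CubeT2

/-! ### Cube condition: dispatch by constructor pattern -/

section CubeDispatch

variable {N : ℕ}

/-- All three letters are `t`'s. -/
lemma cube_lll (HA : PH N) {i j k : ℤ} (hik : i ≠ k) (hji : j ≠ i) (hjk : j ≠ k) {q w1 : W}
    (H : Rw (theta (inl k) (inl i) * q) (theta (inl k) (inl j) * w1))
    (hl : (theta (inl k) (inl i) * q).length ≤ N) :
    ∃ w, Rw (theta (inl i) (inl k) * q) (theta (inl i) (inl j) * w) ∧
      Rw (theta (inl j) (inl k) * w1) (theta (inl j) (inl i) * w) := by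
  simp only [theta_tt (Ne.symm hik), theta_tt (Ne.symm hjk), theta_tt hik,
    theta_tt (Ne.symm hji), theta_tt hjk, theta_tt hji] at H hl ⊢
  have hq : q.length < N := by
    simp only [FreeMonoid.length_mul, FreeMonoid.length_of, t] at hl; omega
  have hcan : Rw q w1 := HA.cancel (a := inl (k - 1)) H hq
  exact ⟨q, Rw.refl _, hcan.symm.mul_left (t (j - 1))⟩

/-- `x = tᵢ`, `y = s_b`, `z = t_k`. -/
lemma cube_lrl (HA : PH N) {i k : ℤ} (hik : i ≠ k) (b : Fin 8) {q w1 : W}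
    (H : Rw (theta (inl k) (inl i) * q) (theta (inl k) (inr b) * w1))
    (hl : (theta (inl k) (inl i) * q).length ≤ N) :
    ∃ w, Rw (theta (inl i) (inl k) * q) (theta (inl i) (inr b) * w) ∧
      Rw (theta (inr b) (inl k) * w1) (theta (inr b) (inl i) * w) := by
  by_cases hb : b.val < 3
  · simp only [theta_tt (Ne.symm hik), theta_tt hik, theta_ts_braid hb,
      theta_st_braid hb, mul_assoc] at H hl ⊢
    have hq : q.length < N := by
      simp only [FreeMonoid.length_mul, FreeMonoid.length_of, t] at hl; omega
    exact cube_P_bb HA i k hb H hq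
  · replace hb : 3 ≤ b.val := Nat.not_lt.mp hb
    simp only [theta_tt (Ne.symm hik), theta_tt hik, theta_ts_comm hb,
      theta_st_comm hb] at H hl ⊢
    have hq : q.length < N := by
      simp only [FreeMonoid.length_mul, FreeMonoid.length_of, t] at hl; omega
    exact cube_P_kk HA i k hb H hq

/-- `x = tᵢ`, `y = tⱼ`, `z = s_c`. -/
lemma cube_llr (HA : PH N) {i j : ℤ} (hij : i ≠ j) (c : Fin 8) {q w1 : W}
    (H : Rw (theta (inr c) (inl i) * q) (theta (inr c) (inl j) * w1))
    (hl : (theta (inr c) (inl i) * q).length ≤ N) :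
    ∃ w, Rw (theta (inl i) (inr c) * q) (theta (inl i) (inl j) * w) ∧
      Rw (theta (inl j) (inr c) * w1) (theta (inl j) (inl i) * w) := by
  by_cases hc : c.val < 3
  · simp only [theta_st_braid hc, theta_ts_braid hc, theta_tt hij,
      theta_tt (Ne.symm hij), mul_assoc] at H hl ⊢
    have hq : q.length + 1 < N := by
      simp only [FreeMonoid.length_mul, FreeMonoid.length_of, t, s] at hl; omega
    exact cube_P_bb_z HA hij hc H hq
  · replace hc : 3 ≤ c.val := Nat.not_lt.mp hc
    simp only [theta_st_comm hc, theta_ts_comm hc, theta_tt hij,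
      theta_tt (Ne.symm hij)] at H hl ⊢
    have hq : q.length < N := by
      simp only [FreeMonoid.length_mul, FreeMonoid.length_of, t] at hl; omega
    exact cube_P_kk_z HA hij hc H hq

end CubeDispatch

section CubeDispatch2

variable {N : ℕ}

/-- `x = tᵢ`, `y = s_b`, `z = s_c`. -/
lemma cube_lrr (HA : PH N) (i : ℤ) {b c : Fin 8} (hbc : b ≠ c) {q w1 : W}
    (H : Rw (theta (inr c) (inl i) * q) (theta (inr c) (inr b) * w1))
    (hl : (theta (inr c) (inl i) * q).length ≤ N) :
    ∃ w, Rw (theta (inl i) (inr c) * q) (theta (inl i) (inr b) * w) ∧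
      Rw (theta (inr b) (inr c) * w1) (theta (inr b) (inl i) * w) := by
  have hcb : c ≠ b := Ne.symm hbc
  by_cases hb : b.val < 3 <;> by_cases hc : c.val < 3 <;> by_cases hbb : bb b c
  · exact absurd hbb (bb_lt3 b c hb hc)
  · -- edges (x,y), (x,z); comm (y,z)
    have hcb' : ¬ bb c b := fun h => hbb (bb_symm h)
    simp only [theta_st_braid hc, theta_ts_braid hc, theta_ts_braid hb, theta_st_braid hb,
      theta_ss_comm hcb hcb', theta_ss_comm hbc hbb, mul_assoc] at H hl ⊢
    have hq : q.length + 1 < N := by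
      simp only [FreeMonoid.length_mul, FreeMonoid.length_of, t, s] at hl; omega
    exact cube_bbk_end HA ((braid_ts hc i).symm) (braid_ts hb i) (comm_ss hcb hcb')
      (theta_ts_braid hb i) (theta_st_braid hb i) (theta_ss_comm hcb hcb')
      (theta_ss_comm hbc hbb) (theta_st_braid hc i) (theta_ts_braid hc i) H hq
  · -- edges (x,y), (y,z); comm (x,z)
    replace hc : 3 ≤ c.val := Nat.not_lt.mp hc
    simp only [theta_st_comm hc, theta_ts_comm hc, theta_ts_braid hb, theta_st_braid hb,
      theta_ss_braid hcb (bb_symm hbb), theta_ss_braid hbc hbb, mul_assoc] at H hl ⊢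
    have hlen := H.length
    simp only [FreeMonoid.length_mul, FreeMonoid.length_of, t, s] at hlen hl
    have hq : w1.length + 1 < N := by omega
    obtain ⟨w, o1, o2⟩ := cube_bbk_end HA (braid_ss (bb_symm hbb)) ((braid_ts hb i).symm)
      ((comm_ts hc i).symm) (theta_st_braid hb i) (theta_ts_braid hb i)
      (theta_st_comm hc i) (theta_ts_comm hc i) (theta_ss_braid hcb (bb_symm hbb))
      (theta_ss_braid hbc hbb) H.symm hq
    exact ⟨w, o2, o1⟩
  · -- edge (x,y) only
    replace hc : 3 ≤ c.val := Nat.not_lt.mp hc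
    have hcb' : ¬ bb c b := fun h => hbb (bb_symm h)
    simp only [theta_st_comm hc, theta_ts_comm hc, theta_ts_braid hb, theta_st_braid hb,
      theta_ss_comm hcb hcb', theta_ss_comm hbc hbb, mul_assoc] at H hl ⊢
    have hq : q.length < N := by
      simp only [FreeMonoid.length_mul, FreeMonoid.length_of, t, s] at hl; omega
    exact cube_kbk HA (braid_ts hb i) ((comm_ts hc i).symm) (comm_ss hcb hcb')
      (theta_ts_braid hb i) (theta_st_braid hb i) H hq
  · -- edges (x,z), (y,z); comm (x,y)
    replace hb : 3 ≤ b.val := Nat.not_lt.mp hb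
    simp only [theta_st_braid hc, theta_ts_braid hc, theta_ts_comm hb, theta_st_comm hb,
      theta_ss_braid hcb (bb_symm hbb), theta_ss_braid hbc hbb, mul_assoc] at H hl ⊢
    have hq : q.length + 1 < N := by
      simp only [FreeMonoid.length_mul, FreeMonoid.length_of, t, s] at hl; omega
    exact cube_bbk HA ((braid_ts hc i).symm) (braid_ss (bb_symm hbb)) (comm_ts hb i)
      (theta_ts_comm hb i) (theta_st_comm hb i) (theta_ss_braid hcb (bb_symm hbb))
      (theta_ss_braid hbc hbb) (theta_st_braid hc i) (theta_ts_braid hc i) H hq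
  · -- edge (x,z) only
    replace hb : 3 ≤ b.val := Nat.not_lt.mp hb
    have hcb' : ¬ bb c b := fun h => hbb (bb_symm h)
    simp only [theta_st_braid hc, theta_ts_braid hc, theta_ts_comm hb, theta_st_comm hb,
      theta_ss_comm hcb hcb', theta_ss_comm hbc hbb, mul_assoc] at H hl ⊢
    have hq : q.length + 1 < N := by
      simp only [FreeMonoid.length_mul, FreeMonoid.length_of, t, s] at hl; omega
    exact cube_bkk HA ((braid_ts hc i).symm) (comm_ts hb i) (comm_ss hcb hcb')
      (theta_ts_comm hb i) (theta_st_comm hb i) (theta_ss_comm hcb hcb')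
      (theta_ss_comm hbc hbb) H hq
  · -- edge (y,z) only
    replace hb : 3 ≤ b.val := Nat.not_lt.mp hb
    replace hc : 3 ≤ c.val := Nat.not_lt.mp hc
    simp only [theta_st_comm hc, theta_ts_comm hc, theta_ts_comm hb, theta_st_comm hb,
      theta_ss_braid hcb (bb_symm hbb), theta_ss_braid hbc hbb, mul_assoc] at H hl ⊢
    have hlen := H.length
    simp only [FreeMonoid.length_mul, FreeMonoid.length_of, t, s] at hlen hl
    have hq : w1.length + 1 < N := by omega
    obtain ⟨w, o1, o2⟩ := cube_bkk HA (braid_ss (bb_symm hbb)) ((comm_ts hb i).symm)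
      ((comm_ts hc i).symm) (theta_st_comm hb i) (theta_ts_comm hb i)
      (theta_st_comm hc i) (theta_ts_comm hc i) H.symm hq
    exact ⟨w, o2, o1⟩
  · -- no edges
    replace hb : 3 ≤ b.val := Nat.not_lt.mp hb
    replace hc : 3 ≤ c.val := Nat.not_lt.mp hc
    have hcb' : ¬ bb c b := fun h => hbb (bb_symm h)
    simp only [theta_st_comm hc, theta_ts_comm hc, theta_ts_comm hb, theta_st_comm hb,
      theta_ss_comm hcb hcb', theta_ss_comm hbc hbb] at H hl ⊢
    have hq : q.length < N := by
      simp only [FreeMonoid.length_mul, FreeMonoid.length_of, t, s] at hl; omega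
    exact cube_kkk HA ((comm_ts hc i).symm) (comm_ss hcb hcb')
      (theta_ts_comm hb i) (theta_st_comm hb i) H hq

/-- `x = s_a`, `y = s_b`, `z = t_k`. -/
lemma cube_rrl (HA : PH N) (k : ℤ) {a b : Fin 8} (hba : b ≠ a) {q w1 : W}
    (H : Rw (theta (inl k) (inr a) * q) (theta (inl k) (inr b) * w1))
    (hl : (theta (inl k) (inr a) * q).length ≤ N) :
    ∃ w, Rw (theta (inr a) (inl k) * q) (theta (inr a) (inr b) * w) ∧
      Rw (theta (inr b) (inl k) * w1) (theta (inr b) (inr a) * w) := by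
  have hab : a ≠ b := Ne.symm hba
  by_cases ha : a.val < 3 <;> by_cases hb : b.val < 3 <;> by_cases hbb : bb a b
  · exact absurd hbb (bb_lt3 a b ha hb)
  · -- edges (x,z), (y,z); comm (x,y)
    have hba' : ¬ bb b a := fun h => hbb (bb_symm h)
    simp only [theta_ts_braid ha, theta_st_braid ha, theta_ts_braid hb, theta_st_braid hb,
      theta_ss_comm hab hbb, theta_ss_comm hba hba', mul_assoc] at H hl ⊢
    have hq : q.length + 1 < N := by
      simp only [FreeMonoid.length_mul, FreeMonoid.length_of, t, s] at hl; omega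
    exact cube_bbk HA (braid_ts ha k) (braid_ts hb k) (comm_ss hab hbb)
      (theta_ss_comm hab hbb) (theta_ss_comm hba hba') (theta_ts_braid hb k)
      (theta_st_braid hb k) (theta_ts_braid ha k) (theta_st_braid ha k) H hq
  · -- edges (x,z), (x,y); comm (y,z)
    replace hb : 3 ≤ b.val := Nat.not_lt.mp hb
    simp only [theta_ts_braid ha, theta_st_braid ha, theta_ts_comm hb, theta_st_comm hb,
      theta_ss_braid hab hbb, theta_ss_braid hba (bb_symm hbb), mul_assoc] at H hl ⊢
    have hq : q.length + 1 < N := by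
      simp only [FreeMonoid.length_mul, FreeMonoid.length_of, t, s] at hl; omega
    exact cube_bbk_end HA (braid_ts ha k) (braid_ss hbb) (comm_ts hb k)
      (theta_ss_braid hab hbb) (theta_ss_braid hba (bb_symm hbb))
      (theta_ts_comm hb k) (theta_st_comm hb k) (theta_ts_braid ha k)
      (theta_st_braid ha k) H hq
  · -- edge (x,z) only
    replace hb : 3 ≤ b.val := Nat.not_lt.mp hb
    have hba' : ¬ bb b a := fun h => hbb (bb_symm h)
    simp only [theta_ts_braid ha, theta_st_braid ha, theta_ts_comm hb, theta_st_comm hb,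
      theta_ss_comm hab hbb, theta_ss_comm hba hba', mul_assoc] at H hl ⊢
    have hq : q.length + 1 < N := by
      simp only [FreeMonoid.length_mul, FreeMonoid.length_of, t, s] at hl; omega
    exact cube_bkk HA (braid_ts ha k) (comm_ss hab hbb) (comm_ts hb k)
      (theta_ss_comm hab hbb) (theta_ss_comm hba hba') (theta_ts_comm hb k)
      (theta_st_comm hb k) H hq
  · -- edges (y,z), (x,y); comm (x,z)
    replace ha : 3 ≤ a.val := Nat.not_lt.mp ha
    simp only [theta_ts_comm ha, theta_st_comm ha, theta_ts_braid hb, theta_st_braid hb,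
      theta_ss_braid hab hbb, theta_ss_braid hba (bb_symm hbb), mul_assoc] at H hl ⊢
    have hlen := H.length
    simp only [FreeMonoid.length_mul, FreeMonoid.length_of, t, s] at hlen hl
    have hq : w1.length + 1 < N := by omega
    obtain ⟨w, o1, o2⟩ := cube_bbk_end HA (braid_ts hb k) (braid_ss (bb_symm hbb))
      (comm_ts ha k) (theta_ss_braid hba (bb_symm hbb)) (theta_ss_braid hab hbb)
      (theta_ts_comm ha k) (theta_st_comm ha k) (theta_ts_braid hb k)
      (theta_st_braid hb k) H.symm hq
    exact ⟨w, o2, o1⟩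
  · -- edge (y,z) only
    replace ha : 3 ≤ a.val := Nat.not_lt.mp ha
    have hba' : ¬ bb b a := fun h => hbb (bb_symm h)
    simp only [theta_ts_comm ha, theta_st_comm ha, theta_ts_braid hb, theta_st_braid hb,
      theta_ss_comm hab hbb, theta_ss_comm hba hba', mul_assoc] at H hl ⊢
    have hlen := H.length
    simp only [FreeMonoid.length_mul, FreeMonoid.length_of, t, s] at hlen hl
    have hq : w1.length + 1 < N := by omega
    obtain ⟨w, o1, o2⟩ := cube_bkk HA (braid_ts hb k) (comm_ss hba hba')
      (comm_ts ha k) (theta_ss_comm hba hba') (theta_ss_comm hab hbb)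
      (theta_ts_comm ha k) (theta_st_comm ha k) H.symm hq
    exact ⟨w, o2, o1⟩
  · -- edge (x,y) only
    replace ha : 3 ≤ a.val := Nat.not_lt.mp ha
    replace hb : 3 ≤ b.val := Nat.not_lt.mp hb
    simp only [theta_ts_comm ha, theta_st_comm ha, theta_ts_comm hb, theta_st_comm hb,
      theta_ss_braid hab hbb, theta_ss_braid hba (bb_symm hbb), mul_assoc] at H hl ⊢
    have hq : q.length < N := by
      simp only [FreeMonoid.length_mul, FreeMonoid.length_of, t, s] at hl; omega
    exact cube_kbk HA (braid_ss hbb) (comm_ts ha k) (comm_ts hb k)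
      (theta_ss_braid hab hbb) (theta_ss_braid hba (bb_symm hbb)) H hq
  · -- no edges
    replace ha : 3 ≤ a.val := Nat.not_lt.mp ha
    replace hb : 3 ≤ b.val := Nat.not_lt.mp hb
    have hba' : ¬ bb b a := fun h => hbb (bb_symm h)
    simp only [theta_ts_comm ha, theta_st_comm ha, theta_ts_comm hb, theta_st_comm hb,
      theta_ss_comm hab hbb, theta_ss_comm hba hba'] at H hl ⊢
    have hq : q.length < N := by
      simp only [FreeMonoid.length_mul, FreeMonoid.length_of, t, s] at hl; omega
    exact cube_kkk HA (comm_ts ha k) (comm_ts hb k)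
      (theta_ss_comm hab hbb) (theta_ss_comm hba hba') H hq

/-- `x = s_a`, `y = s_b`, `z = s_c`. -/
lemma cube_rrr (HA : PH N) {a b c : Fin 8} (hac : a ≠ c) (hba : b ≠ a) (hbc : b ≠ c)
    {q w1 : W}
    (H : Rw (theta (inr c) (inr a) * q) (theta (inr c) (inr b) * w1))
    (hl : (theta (inr c) (inr a) * q).length ≤ N) :
    ∃ w, Rw (theta (inr a) (inr c) * q) (theta (inr a) (inr b) * w) ∧
      Rw (theta (inr b) (inr c) * w1) (theta (inr b) (inr a) * w) := by
  have hca : c ≠ a := Ne.symm hac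
  have hab : a ≠ b := Ne.symm hba
  have hcb : c ≠ b := Ne.symm hbc
  by_cases h1 : bb a c <;> by_cases h2 : bb b c <;> by_cases h3 : bb a b
  · exact absurd h2 (fun h => bb_no_triangle a b c h3 h1 h)
  · -- edges (x,z), (y,z); comm (x,y)
    have h3' : ¬ bb b a := fun h => h3 (bb_symm h)
    simp only [theta_ss_braid hca (bb_symm h1), theta_ss_braid hac h1,
      theta_ss_braid hcb (bb_symm h2), theta_ss_braid hbc h2,
      theta_ss_comm hab h3, theta_ss_comm hba h3', mul_assoc] at H hl ⊢
    have hq : q.length + 1 < N := by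
      simp only [FreeMonoid.length_mul, FreeMonoid.length_of, s] at hl; omega
    exact cube_bbk HA (braid_ss (bb_symm h1)) (braid_ss (bb_symm h2)) (comm_ss hab h3)
      (theta_ss_comm hab h3) (theta_ss_comm hba h3')
      (theta_ss_braid hcb (bb_symm h2)) (theta_ss_braid hbc h2)
      (theta_ss_braid hca (bb_symm h1)) (theta_ss_braid hac h1) H hq
  · -- edges (x,z), (x,y); comm (y,z)
    have h2' : ¬ bb c b := fun h => h2 (bb_symm h)
    simp only [theta_ss_braid hca (bb_symm h1), theta_ss_braid hac h1,
      theta_ss_comm hcb h2', theta_ss_comm hbc h2,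
      theta_ss_braid hab h3, theta_ss_braid hba (bb_symm h3), mul_assoc] at H hl ⊢
    have hq : q.length + 1 < N := by
      simp only [FreeMonoid.length_mul, FreeMonoid.length_of, s] at hl; omega
    exact cube_bbk_end HA (braid_ss (bb_symm h1)) (braid_ss h3) (comm_ss hcb h2')
      (theta_ss_braid hab h3) (theta_ss_braid hba (bb_symm h3))
      (theta_ss_comm hcb h2') (theta_ss_comm hbc h2)
      (theta_ss_braid hca (bb_symm h1)) (theta_ss_braid hac h1) H hq
  · -- edge (x,z) only
    have h2' : ¬ bb c b := fun h => h2 (bb_symm h)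
    have h3' : ¬ bb b a := fun h => h3 (bb_symm h)
    simp only [theta_ss_braid hca (bb_symm h1), theta_ss_braid hac h1,
      theta_ss_comm hcb h2', theta_ss_comm hbc h2,
      theta_ss_comm hab h3, theta_ss_comm hba h3', mul_assoc] at H hl ⊢
    have hq : q.length + 1 < N := by
      simp only [FreeMonoid.length_mul, FreeMonoid.length_of, s] at hl; omega
    exact cube_bkk HA (braid_ss (bb_symm h1)) (comm_ss hab h3) (comm_ss hcb h2')
      (theta_ss_comm hab h3) (theta_ss_comm hba h3')
      (theta_ss_comm hcb h2') (theta_ss_comm hbc h2) H hq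
  · -- edges (y,z), (x,y); comm (x,z)
    have h1' : ¬ bb c a := fun h => h1 (bb_symm h)
    simp only [theta_ss_comm hca h1', theta_ss_comm hac h1,
      theta_ss_braid hcb (bb_symm h2), theta_ss_braid hbc h2,
      theta_ss_braid hab h3, theta_ss_braid hba (bb_symm h3), mul_assoc] at H hl ⊢
    have hlen := H.length
    simp only [FreeMonoid.length_mul, FreeMonoid.length_of, s] at hlen hl
    have hq : w1.length + 1 < N := by omega
    obtain ⟨w, o1, o2⟩ := cube_bbk_end HA (braid_ss (bb_symm h2)) (braid_ss (bb_symm h3))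
      (comm_ss hca h1') (theta_ss_braid hba (bb_symm h3)) (theta_ss_braid hab h3)
      (theta_ss_comm hca h1') (theta_ss_comm hac h1)
      (theta_ss_braid hcb (bb_symm h2)) (theta_ss_braid hbc h2) H.symm hq
    exact ⟨w, o2, o1⟩
  · -- edge (y,z) only
    have h1' : ¬ bb c a := fun h => h1 (bb_symm h)
    have h3' : ¬ bb b a := fun h => h3 (bb_symm h)
    simp only [theta_ss_comm hca h1', theta_ss_comm hac h1,
      theta_ss_braid hcb (bb_symm h2), theta_ss_braid hbc h2,
      theta_ss_comm hab h3, theta_ss_comm hba h3', mul_assoc] at H hl ⊢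
    have hlen := H.length
    simp only [FreeMonoid.length_mul, FreeMonoid.length_of, s] at hlen hl
    have hq : w1.length + 1 < N := by omega
    obtain ⟨w, o1, o2⟩ := cube_bkk HA (braid_ss (bb_symm h2)) (comm_ss hba h3')
      (comm_ss hca h1') (theta_ss_comm hba h3') (theta_ss_comm hab h3)
      (theta_ss_comm hca h1') (theta_ss_comm hac h1) H.symm hq
    exact ⟨w, o2, o1⟩
  · -- edge (x,y) only
    have h1' : ¬ bb c a := fun h => h1 (bb_symm h)
    have h2' : ¬ bb c b := fun h => h2 (bb_symm h)
    simp only [theta_ss_comm hca h1', theta_ss_comm hac h1,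
      theta_ss_comm hcb h2', theta_ss_comm hbc h2,
      theta_ss_braid hab h3, theta_ss_braid hba (bb_symm h3), mul_assoc] at H hl ⊢
    have hq : q.length < N := by
      simp only [FreeMonoid.length_mul, FreeMonoid.length_of, s] at hl; omega
    exact cube_kbk HA (braid_ss h3) (comm_ss hca h1') (comm_ss hcb h2')
      (theta_ss_braid hab h3) (theta_ss_braid hba (bb_symm h3)) H hq
  · -- no edges
    have h1' : ¬ bb c a := fun h => h1 (bb_symm h)
    have h2' : ¬ bb c b := fun h => h2 (bb_symm h)
    have h3' : ¬ bb b a := fun h => h3 (bb_symm h)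
    simp only [theta_ss_comm hca h1', theta_ss_comm hac h1,
      theta_ss_comm hcb h2', theta_ss_comm hbc h2,
      theta_ss_comm hab h3, theta_ss_comm hba h3'] at H hl ⊢
    have hq : q.length < N := by
      simp only [FreeMonoid.length_mul, FreeMonoid.length_of, s] at hl; omega
    exact cube_kkk HA (comm_ss hca h1') (comm_ss hcb h2')
      (theta_ss_comm hab h3) (theta_ss_comm hba h3') H hq

end CubeDispatch2

/-! ### The full cube condition and the key reduction lemma -/

section Main

lemma cube_main {N : ℕ} (HA : PH N) (x y z : S) (hxz : x ≠ z) {q w1 : W}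
    (H : Rw (theta z x * q) (theta z y * w1))
    (hl : (theta z x * q).length ≤ N) :
    ∃ w, Rw (theta x z * q) (theta x y * w) ∧ Rw (theta y z * w1) (theta y x * w) := by
  by_cases hyx : y = x
  · subst hyx
    have hc : Rw q w1 := HA.cancel_word (theta z y) H hl
    refine ⟨theta y z * q, ?_, ?_⟩
    · rw [theta_self, one_mul]
      exact Rw.refl _
    · rw [theta_self, one_mul]
      exact hc.symm.mul_left (theta y z)
  by_cases hyz : y = z
  · subst hyz
    rw [theta_self, one_mul] at H
    refine ⟨q, Rw.refl _, ?_⟩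
    rw [theta_self, one_mul]
    exact H.symm
  rcases x with i | a <;> rcases y with j | b <;> rcases z with k | c
  · exact cube_lll HA (fun h => hxz (congrArg inl h)) (fun h => hyx (congrArg inl h))
      (fun h => hyz (congrArg inl h)) H hl
  · exact cube_llr HA (fun h => hyx (congrArg inl h.symm)) c H hl
  · exact cube_lrl HA (fun h => hxz (congrArg inl h)) b H hl
  · exact cube_lrr HA i (fun h => hyz (congrArg inr h)) H hl
  · obtain ⟨w, o1, o2⟩ := cube_lrl HA (fun h => hyz (congrArg inl h)) a H.symm
      (by rw [← H.length]; exact hl)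
    exact ⟨w, o2, o1⟩
  · obtain ⟨w, o1, o2⟩ := cube_lrr HA j (fun h => hxz (congrArg inr h)) H.symm
      (by rw [← H.length]; exact hl)
    exact ⟨w, o2, o1⟩
  · exact cube_rrl HA k (fun h => hyx (congrArg inr h)) H hl
  · exact cube_rrr HA (fun h => hxz (congrArg inr h)) (fun h => hyx (congrArg inr h))
      (fun h => hyz (congrArg inr h)) H hl

lemma of_mul_eq {x y : S} {u v : W} (h : FreeMonoid.of x * u = FreeMonoid.of y * v) :
    x = y ∧ u = v := by
  have h2 := congrArg FreeMonoid.toList h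
  simp only [FreeMonoid.toList_mul, FreeMonoid.toList_of, List.cons_append,
    List.nil_append, List.cons.injEq] at h2
  exact ⟨h2.1, FreeMonoid.toList.injective h2.2⟩

lemma eq_one_or_head (p : W) : p = 1 ∨ ∃ (a : S) (p' : W), p = FreeMonoid.of a * p' := by
  cases hp : FreeMonoid.toList p with
  | nil =>
    left
    apply FreeMonoid.toList.injective
    simpa using hp
  | cons a l =>
    right
    refine ⟨a, FreeMonoid.ofList l, ?_⟩
    apply FreeMonoid.toList.injective
    simp [hp]

theorem keyA : ∀ N : ℕ, PH N := by
  intro N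
  induction N using Nat.strong_induction_on with
  | _ N IH =>
    intro u v hlen huv
    revert hlen
    induction huv using Relation.ReflTransGen.head_induction_on with
    | refl =>
      intro _ x u₀ y v₀ hu hv
      obtain ⟨rfl, rfl⟩ := of_mul_eq (hu.symm.trans hv)
      exact ⟨u₀, by rw [theta_self, one_mul]; exact Rw.refl _,
        by rw [theta_self, one_mul]; exact Rw.refl _⟩
    | head hstep hrest ih =>
      rename_i u' c'
      intro hlen x u₀ y v₀ hu hv
      subst hu
      have hlc : c'.length ≤ N := by rw [← hstep.length]; exact hlen
      obtain ⟨l, r, p, q, hlr, hal, hcr⟩ := hstep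
      rcases step_shape hlr with heq | ⟨x', z', hne, rfl, rfl⟩
      · subst heq
        refine ih hlc x u₀ y v₀ ?_ hv
        rw [hcr, ← hal]
      · rcases eq_one_or_head p with rfl | ⟨h', p', rfl⟩
        · rw [one_mul, mul_assoc] at hal hcr
          obtain ⟨rfl, hu₀⟩ := of_mul_eq hal
          obtain ⟨w1, hA, hB⟩ := ih hlc z' (theta z' x * q) y v₀ hcr hv
          have hNpos : 1 ≤ N := by
            simp only [FreeMonoid.length_mul, FreeMonoid.length_of] at hlen; omega
          have hN1 : (theta z' x * q).length ≤ N - 1 := by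
            have e1 := theta_length_symm x z'
            rw [hu₀] at hlen
            simp only [FreeMonoid.length_mul, FreeMonoid.length_of] at hlen ⊢
            omega
          obtain ⟨w, hC, hD⟩ := cube_main (IH (N - 1) (by omega)) x y z' hne hA hN1
          exact ⟨w, hu₀ ▸ hC, hB.trans hD⟩
        · simp only [mul_assoc] at hal hcr
          obtain ⟨rfl, hu₀⟩ := of_mul_eq hal
          have step1 : Step (p' * (FreeMonoid.of x' * (theta x' z' * q)))
              (p' * (FreeMonoid.of z' * (theta z' x' * q))) :=
            ⟨FreeMonoid.of x' * theta x' z', FreeMonoid.of z' * theta z' x', p', q, hlr,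
              by simp [mul_assoc], by simp [mul_assoc]⟩
          obtain ⟨w, hA, hB⟩ := ih hlc x (p' * (FreeMonoid.of z' * (theta z' x' * q))) y v₀
            hcr hv
          exact ⟨w, hu₀ ▸ (step1.rw.trans hA), hB⟩

/-! ### Cancellativity on words -/

lemma rw_cancel_left (α : W) {u v : W} (h : Rw (α * u) (α * v)) : Rw u v :=
  (keyA (α * u).length).cancel_word α h le_rfl

end Main

/-! ### The mirror anti-automorphism and right cancellation -/

section Mirror

def phi : S → S := fun x => match x with
  | inl i => inl (-i)
  | inr b => inr b

def mir (w : W) : W := FreeMonoid.ofList ((FreeMonoid.toList w).map phi).reverse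

lemma mir_mul (a b : W) : mir (a * b) = mir b * mir a := by
  apply FreeMonoid.toList.injective
  simp [mir, FreeMonoid.toList_mul]

lemma mir_t (i : ℤ) : mir (t i) = t (-i) := rfl

lemma mir_s (b : Fin 8) : mir (s b) = s b := rfl

lemma mir_mir (w : W) : mir (mir w) = w := by
  apply FreeMonoid.toList.injective
  have hphi : ∀ x, phi (phi x) = x := by rintro (i | b) <;> simp [phi]
  simp [mir, List.map_reverse, List.map_map, Function.comp_def, hphi]

lemma rels_mir {a b : W} (h : rels a b) : Rw (mir a) (mir b) := by
  rcases h with ⟨i, j, hj, ha, hb⟩ | ⟨i, j, ha, hb⟩ | ⟨p, hp, ha, hb⟩ |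
      ⟨i, j, hne, h1, h2, ha, hb⟩ | ⟨i, j, hj, ha, hb⟩ <;> subst ha <;> subst hb <;>
    simp only [mir_mul, mir_t, mir_s, mul_assoc]
  · simpa [mul_assoc] using rels_rw (Or.inl ⟨-i, j, hj, rfl, rfl⟩)
  · have h := tt_rw (-(i - 1)) (-(j - 1))
    rw [show (-(i - 1) : ℤ) - 1 = -i from by ring,
      show (-(j - 1) : ℤ) - 1 = -j from by ring] at h
    simpa [mul_assoc] using h
  · simpa [mul_assoc] using
      rels_rw (Or.inr (Or.inr (Or.inl ⟨p, hp, rfl, rfl⟩)))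
  · exact rels_rw (Or.inr (Or.inr (Or.inr (Or.inl ⟨j, i, Ne.symm hne, h2, h1, rfl, rfl⟩))))
  · exact (rels_rw (Or.inr (Or.inr (Or.inr (Or.inr ⟨-i, j, hj, rfl, rfl⟩))))).symm

lemma step_mir {a b : W} (h : Step a b) : Rw (mir a) (mir b) := by
  obtain ⟨l, r, p, q, hlr, rfl, rfl⟩ := h
  have hr : Rw (mir l) (mir r) := by
    rcases hlr with h | h
    · exact rels_mir h
    · exact (rels_mir h).symm
  simp only [mir_mul]
  simpa [mul_assoc] using ((hr.mul_left (mir q)).mul_right (mir p))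

lemma rw_mir {a b : W} (h : Rw a b) : Rw (mir a) (mir b) := by
  induction h with
  | refl => exact Rw.refl _
  | tail _ hs ih => exact ih.trans (step_mir hs)

lemma rw_cancel_right (α : W) {u v : W} (h : Rw (u * α) (v * α)) : Rw u v := by
  have h2 := rw_mir h
  rw [mir_mul, mir_mul] at h2
  have h3 := rw_cancel_left (mir α) h2
  have h4 := rw_mir h3
  rwa [mir_mir, mir_mir] at h4

end Mirror

/-! ### Bridge to the presented monoid -/

section Bridge

def rwCon : Con W where
  r := Rw
  iseqv := ⟨Rw.refl, Rw.symm, Rw.trans⟩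
  mul' := fun h h' => Rw.mul_congr h h'

lemma conGen_iff_rw {a b : W} : (conGen rels) a b ↔ Rw a b := by
  constructor
  · intro h
    exact ((Con.conGen_le (c := rwCon)).mpr fun x y hxy => rels_rw hxy) h
  · intro h
    induction h with
    | refl => exact (conGen rels).refl _
    | tail _ hs ih =>
      refine (conGen rels).trans ih ?_
      obtain ⟨l, r, p, q, hlr, rfl, rfl⟩ := hs
      have hb : (conGen rels) l r := by
        rcases hlr with h | h
        · exact ConGen.Rel.of _ _ h
        · exact (conGen rels).symm (ConGen.Rel.of _ _ h)
      exact (conGen rels).mul ((conGen rels).mul ((conGen rels).refl p) hb)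
        ((conGen rels).refl q)

end Bridge

theorem cancellative :
    ∀ u v w : M, (u * v = u * w → v = w) ∧ (v * u = w * u → v = w) := by
  intro u v w
  refine PresentedMonoid.inductionOn₃ u v w ?_
  intro a b c
  constructor
  · intro h
    rw [← map_mul, ← map_mul] at h
    have h1 : (conGen rels) (a * b) (a * c) := Quotient.eq''.mp h
    have h2 : Rw b c := rw_cancel_left a (conGen_iff_rw.mp h1)
    exact Quotient.eq''.mpr (conGen_iff_rw.mpr h2)
  · intro h
    rw [← map_mul, ← map_mul] at h
    have h1 : (conGen rels) (b * a) (c * a) := Quotient.eq''.mp h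
    have h2 : Rw b c := rw_cancel_right a (conGen_iff_rw.mp h1)
    exact Quotient.eq''.mpr (conGen_iff_rw.mpr h2)

end EllipticE8Monoid
end
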